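/- Let η ≠ 0 be real and let u : ℝ² → ℝ be a smooth function of (x,t). Define f₁₁ = 0, f₁₂ = (1/η) sin u, f₂₁ = η, f₂₂ = (1/η) cos u, f₃₁ = u_x, f₃₂ = 0. Then the first two structure-equation identities ∂_x f₁₂ − ∂_t f₁₁ = f₃₁f₂₂ − f₃₂f₂₁ and ∂_x f₂₂ − ∂_t f₂₁ = f₁₁f₃₂ − f₁₂f₃₁ hold identically for every smooth u, while the third identity ∂_x f₃₂ − ∂_t f₃₁ = f₁₁f₂₂ − f₁₂f₂₁ holds at a point if and only if u_{xt} = sin u at that point. Hence the 1-forms ω¹ = (1/η) sin u dt, ω² = η dx + (1/η) cos u dt, ω³ = u_x dx satisfy the structure equations dω¹ = ω³∧ω², dω² = ω¹∧ω³, dω³ = ω¹∧ω² exactly when u is a solution of the sine-Gordon equation u_{xt} = sin u. -/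

import Mathlib

/-- for `f₁₁ = 0`, `f₁₂ = (1/η) sin u`, `f₂₁ = η`, `f₂₂ = (1/η) cos u`,
`f₃₁ = u_x`, `f₃₂ = 0`, the first two structure-equation identities hold for every smooth `u`,
while the third holds at a point if and only if `u_{xt} = sin u` there: the associated
`1`-forms satisfy the structure equations exactly for solutions of sine-Gordon. -/
theorem sine_gordon_first_family
    (η : ℝ) (hη : η ≠ 0) (u : ℝ → ℝ → ℝ)
    (hu : ContDiff ℝ (⊤ : ℕ∞) (fun p : ℝ × ℝ => u p.1 p.2)) :
    (∀ x t : ℝ,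
      deriv (fun s => 1 / η * Real.sin (u s t)) x - deriv (fun _ : ℝ => (0 : ℝ)) t
        = deriv (fun s => u s t) x * (1 / η * Real.cos (u x t)) - 0 * η) ∧
    (∀ x t : ℝ,
      deriv (fun s => 1 / η * Real.cos (u s t)) x - deriv (fun _ : ℝ => η) t
        = 0 * 0 - 1 / η * Real.sin (u x t) * deriv (fun s => u s t) x) ∧
    (∀ x t : ℝ,
      (deriv (fun _ : ℝ => (0 : ℝ)) x - deriv (fun s => deriv (fun r => u r s) x) t
          = 0 * (1 / η * Real.cos (u x t)) - 1 / η * Real.sin (u x t) * η)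
        ↔ deriv (fun s => deriv (fun r => u r s) x) t = Real.sin (u x t)) := by
  have hd : ∀ x t : ℝ, HasDerivAt (fun s => u s t) (deriv (fun s => u s t) x) x := by
    intro x t
    have : DifferentiableAt ℝ (fun s => u s t) x := by
      have h1 : Differentiable ℝ (fun p : ℝ × ℝ => u p.1 p.2) :=
        hu.differentiable (by simp)
      exact (h1.comp (differentiable_id.prodMk (differentiable_const t))).differentiableAt
    exact this.hasDerivAt
  refine ⟨?_, ?_, ?_⟩
  · intro x t
    have h := ((hd x t).sin.const_mul (1 / η)).deriv
    rw [h, deriv_const]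
    ring
  · intro x t
    have h := ((hd x t).cos.const_mul (1 / η)).deriv
    rw [h, deriv_const]
    ring
  · intro x t
    rw [deriv_const]
    constructor
    · intro h
      field_simp at h
      apply mul_right_cancel₀ hη
      linarith [h]
    · intro h
      rw [h]; field_simp; ring
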